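/- (Proposition 3, TYPO preservation.) Let Y be a finite type with at least two elements. Consider two prompts x_g and x_b with full-support BT-optimal policies π*_g and π*_b on Y, and full-support reference policies q_g and q_b with q_g = π*_g and q_b ≠ π*_b. For λ > 0, positive pair weights w_g(y₁,y₂), w_b(y₁,y₂) > 0, and a pair of full-support policies (π_g, π_b), define the TYPO loss L(π_g, π_b) = L_g(π_g) + L_b(π_b), where for a prompt with target π* and reference q, the per-prompt loss of π is ∑_{y₁≠y₂} w(y₁,y₂)·KL_b(π*(y₁)/(π*(y₁)+π*(y₂)) ‖ π(y₁)/(π(y₁)+π(y₂))) + λ·∑_y q(y)·log(q(y)/π(y)). Then every global minimizer (π̂_g, π̂_b) of L satisfies π̂_g = π*_g, irrespective of the value of π̂_b; in particular, the optimal policy is preserved at the good prompt even when the minimizing policy at the bad prompt differs from its reference q_b. -/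
import Mathlib

noncomputable def KLb (p q : ℝ) : ℝ :=
  p * Real.log (p / q) + (1 - p) * Real.log ((1 - p) / (1 - q))

lemma term_lb (p q : ℝ) (hp : 0 < p) (hq : 0 < q) :
    p - q ≤ p * Real.log (p / q) := by
  have h := Real.log_le_sub_one_of_pos (div_pos hq hp)
  have hlog : Real.log (p / q) = - Real.log (q / p) := by
    rw [← Real.log_inv, inv_div]
  have hpq : p * (q / p) = q := by field_simp
  nlinarith [h, hp]

lemma term_eq (p q : ℝ) (hp : 0 < p) (hq : 0 < q)
    (h : p * Real.log (p / q) = p - q) : p = q := by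
  by_contra hne
  have hne' : q / p ≠ 1 := by
    intro h1
    exact hne ((div_eq_one_iff_eq (ne_of_gt hp)).mp h1).symm
  have h2 := Real.log_lt_sub_one_of_pos (div_pos hq hp) hne'
  have hlog : Real.log (p / q) = - Real.log (q / p) := by
    rw [← Real.log_inv, inv_div]
  have hpq : p * (q / p) = q := by field_simp
  nlinarith [h2, hp]

lemma klb_nonneg (p q : ℝ) (hp0 : 0 < p) (hp1 : p < 1) (hq0 : 0 < q) (hq1 : q < 1) :
    0 ≤ KLb p q := by
  have h1 := term_lb p q hp0 hq0
  have h2 := term_lb (1 - p) (1 - q) (by linarith) (by linarith)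
  unfold KLb
  linarith

lemma klb_self (p : ℝ) (hp : p ≠ 0) (hp1 : p ≠ 1) : KLb p p = 0 := by
  unfold KLb
  rw [div_self hp, div_self (sub_ne_zero.mpr (Ne.symm hp1)), Real.log_one]
  ring

lemma gibbs_nonneg {Y : Type*} [Fintype Y] (p q : Y → ℝ)
    (hp : ∀ y, 0 < p y) (hq : ∀ y, 0 < q y)
    (hps : ∑ y, p y = 1) (hqs : ∑ y, q y = 1) :
    0 ≤ ∑ y, p y * Real.log (p y / q y) := by
  have h : ∑ y, (p y - q y) ≤ ∑ y, p y * Real.log (p y / q y) :=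
    Finset.sum_le_sum fun y _ => term_lb (p y) (q y) (hp y) (hq y)
  rw [Finset.sum_sub_distrib, hps, hqs] at h
  linarith

lemma gibbs_eq {Y : Type*} [Fintype Y] (p q : Y → ℝ)
    (hp : ∀ y, 0 < p y) (hq : ∀ y, 0 < q y)
    (hps : ∑ y, p y = 1) (hqs : ∑ y, q y = 1)
    (h0 : ∑ y, p y * Real.log (p y / q y) ≤ 0) : p = q := by
  have hsum : ∑ y, (p y * Real.log (p y / q y) - (p y - q y)) ≤ 0 := by
    rw [Finset.sum_sub_distrib, Finset.sum_sub_distrib, hps, hqs]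
    linarith
  have hnn : ∀ y ∈ Finset.univ, 0 ≤ p y * Real.log (p y / q y) - (p y - q y) :=
    fun y _ => by linarith [term_lb (p y) (q y) (hp y) (hq y)]
  have hz := (Finset.sum_eq_zero_iff_of_nonneg hnn).mp
    (le_antisymm hsum (Finset.sum_nonneg hnn))
  funext y
  have := hz y (Finset.mem_univ y)
  exact term_eq (p y) (q y) (hp y) (hq y) (by linarith)

lemma frac_mem (a b : ℝ) (ha : 0 < a) (hb : 0 < b) :
    0 < a / (a + b) ∧ a / (a + b) < 1 :=
  ⟨div_pos ha (by linarith),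
   (div_lt_one (by linarith)).mpr (by linarith)⟩

theorem typo_preservation
    {Y : Type*} [Fintype Y] [DecidableEq Y] (hY : 1 < Fintype.card Y)
    (πstarg πstarb qg qb : Y → ℝ)
    (hgPos : ∀ y, 0 < πstarg y) (hgSum : ∑ y, πstarg y = 1)
    (hbPos : ∀ y, 0 < πstarb y) (hbSum : ∑ y, πstarb y = 1)
    (hqgPos : ∀ y, 0 < qg y) (hqgSum : ∑ y, qg y = 1)
    (hqbPos : ∀ y, 0 < qb y) (hqbSum : ∑ y, qb y = 1)
    (hgood : qg = πstarg) (hbad : qb ≠ πstarb)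
    (lam : ℝ) (hlam : 0 < lam)
    (wg wb : Y → Y → ℝ)
    (hwg : ∀ y₁ y₂, y₁ ≠ y₂ → 0 < wg y₁ y₂)
    (hwb : ∀ y₁ y₂, y₁ ≠ y₂ → 0 < wb y₁ y₂)
    (Lg Lb : (Y → ℝ) → ℝ)
    (hLg : ∀ π : Y → ℝ,
      Lg π = (∑ y₁, ∑ y₂, if y₁ ≠ y₂ then
          wg y₁ y₂ * KLb (πstarg y₁ / (πstarg y₁ + πstarg y₂)) (π y₁ / (π y₁ + π y₂))
        else 0) +
        lam * ∑ y, qg y * Real.log (qg y / π y))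
    (hLb : ∀ π : Y → ℝ,
      Lb π = (∑ y₁, ∑ y₂, if y₁ ≠ y₂ then
          wb y₁ y₂ * KLb (πstarb y₁ / (πstarb y₁ + πstarb y₂)) (π y₁ / (π y₁ + π y₂))
        else 0) +
        lam * ∑ y, qb y * Real.log (qb y / π y))
    (πhatg πhatb : Y → ℝ)
    (hhatgPos : ∀ y, 0 < πhatg y) (hhatgSum : ∑ y, πhatg y = 1)
    (hhatbPos : ∀ y, 0 < πhatb y) (hhatbSum : ∑ y, πhatb y = 1)
    (hmin : ∀ πg πb : Y → ℝ, (∀ y, 0 < πg y) → (∑ y, πg y = 1) →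
      (∀ y, 0 < πb y) → (∑ y, πb y = 1) →
      Lg πhatg + Lb πhatb ≤ Lg πg + Lb πb) :
    πhatg = πstarg := by
  -- Lg at πstarg is zero
  have hLgstar : Lg πstarg = 0 := by
    rw [hLg]
    have hS : (∑ y₁, ∑ y₂, if y₁ ≠ y₂ then
        wg y₁ y₂ * KLb (πstarg y₁ / (πstarg y₁ + πstarg y₂))
          (πstarg y₁ / (πstarg y₁ + πstarg y₂)) else 0) = 0 := by
      apply Finset.sum_eq_zero
      intro y₁ _
      apply Finset.sum_eq_zero
      intro y₂ _
      split_ifs with h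
      · obtain ⟨h0, h1⟩ := frac_mem _ _ (hgPos y₁) (hgPos y₂)
        rw [klb_self _ (ne_of_gt h0) (ne_of_lt h1)]
        ring
      · rfl
    have hK : (∑ y, qg y * Real.log (qg y / πstarg y)) = 0 := by
      apply Finset.sum_eq_zero
      intro y _
      rw [hgood, div_self (ne_of_gt (hgPos y)), Real.log_one, mul_zero]
    rw [hS, hK, mul_zero, add_zero]
  -- minimality comparison
  have hcmp := hmin πstarg πhatb hgPos hgSum hhatbPos hhatbSum
  have hle : Lg πhatg ≤ 0 := by
    rw [hLgstar] at hcmp; linarith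
  rw [hLg] at hle
  -- nonnegativity of the pairwise sum at πhatg
  have hS : 0 ≤ ∑ y₁, ∑ y₂, if y₁ ≠ y₂ then
      wg y₁ y₂ * KLb (πstarg y₁ / (πstarg y₁ + πstarg y₂))
        (πhatg y₁ / (πhatg y₁ + πhatg y₂)) else 0 := by
    apply Finset.sum_nonneg
    intro y₁ _
    apply Finset.sum_nonneg
    intro y₂ _
    split_ifs with h
    · obtain ⟨hp0, hp1⟩ := frac_mem _ _ (hgPos y₁) (hgPos y₂)
      obtain ⟨hq0, hq1⟩ := frac_mem _ _ (hhatgPos y₁) (hhatgPos y₂)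
      exact mul_nonneg (le_of_lt (hwg y₁ y₂ h)) (klb_nonneg _ _ hp0 hp1 hq0 hq1)
    · exact le_refl 0
  have hK0 : 0 ≤ ∑ y, qg y * Real.log (qg y / πhatg y) :=
    gibbs_nonneg qg πhatg hqgPos hhatgPos hqgSum hhatgSum
  have hKle : ∑ y, qg y * Real.log (qg y / πhatg y) ≤ 0 := by
    by_contra hK
    push_neg at hK
    nlinarith [mul_pos hlam hK]
  have := gibbs_eq qg πhatg hqgPos hhatgPos hqgSum hhatgSum hKle
  rw [hgood] at this
  exact this.symm
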